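/- Let p and q be probability density functions on ℝ with common support R, suppose the differential Shannon cross-entropy h(p;q) is finite, and suppose E_{A∼p}[1/q(A)] = ∫_R p/q dμ < ∞. Then lim_{α ↑ 1} h_α(p;q) = h(p;q), i.e., the differential Rényi cross-entropy of order α converges to the differential Shannon cross-entropy as α tends to 1 from below. -/

import Mathlib

open MeasureTheory Filter Topology Set

lemma my_measurable_rpow_const {q : ℝ → ℝ} (hq : Measurable q) (hq0 : ∀ x, 0 ≤ q x) (t : ℝ) :
    Measurable fun x => q x ^ t := by
  have h : ∀ x, q x ^ t
      = if q x = 0 then (if t = 0 then 1 else 0) else Real.exp (Real.log (q x) * t) := by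
    intro x
    rcases eq_or_ne (q x) 0 with h | h
    · rw [h, if_pos rfl]
      rcases eq_or_ne t 0 with ht | ht
      · simp [ht]
      · simp [Real.zero_rpow ht, ht]
    · rw [if_neg h, Real.rpow_def_of_pos (lt_of_le_of_ne (hq0 x) (Ne.symm h))]
  simp_rw [h]
  exact Measurable.ite (hq (measurableSet_singleton 0)) measurable_const
    (Real.measurable_exp.comp ((Real.measurable_log.comp hq).mul_const t))

lemma my_key_ineq {c t : ℝ} (hc : 0 < c) (ht : t ∈ Set.Ioo (-1 : ℝ) 0) :
    |(c ^ t - 1) / t| ≤ |Real.log c| + (1 + 1 / c) := by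
  obtain ⟨ht1, ht0⟩ := ht
  have h1 : (c ^ t - 1) / t ≤ Real.log c := by
    rw [div_le_iff_of_neg ht0]
    have := Real.add_one_le_exp (Real.log c * t)
    rw [Real.rpow_def_of_pos hc]
    linarith
  have h2 : 1 - 1 / c ≤ (c ^ t - 1) / t := by
    rw [le_div_iff_of_neg ht0]
    have hconv := convexOn_exp.2 (Set.mem_univ (0 : ℝ)) (Set.mem_univ (-Real.log c))
      (by linarith : (0:ℝ) ≤ 1 + t) (by linarith : (0:ℝ) ≤ -t) (by ring)
    simp only [smul_eq_mul, mul_zero, zero_add, Real.exp_zero, mul_one] at hconv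
    rw [Real.exp_neg, Real.exp_log hc] at hconv
    have hx : -t * -Real.log c = Real.log c * t := by ring
    rw [hx] at hconv
    rw [Real.rpow_def_of_pos hc]
    have hinv : (0:ℝ) < 1 / c := by positivity
    calc Real.exp (Real.log c * t) - 1 ≤ (1 + t) + -t * c⁻¹ - 1 := by linarith
      _ = (1 - 1/c) * t := by field_simp; ring
  have hinv : (0:ℝ) ≤ 1 / c := by positivity
  rw [abs_le]
  constructor
  · have := abs_nonneg (Real.log c)
    linarith
  · have := le_abs_self (Real.log c)
    linarith

lemma my_tendsto_slope {c : ℝ} (hc : 0 < c) :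
    Tendsto (fun t : ℝ => (c ^ t - 1) / t) (𝓝[<] (0:ℝ)) (𝓝 (Real.log c)) := by
  have hd : HasDerivAt (fun t : ℝ => c ^ t) (Real.log c) 0 := by
    have h := (Real.hasStrictDerivAt_const_rpow hc 0).hasDerivAt
    simpa using h
  rw [hasDerivAt_iff_tendsto_slope] at hd
  have h2 := hd.mono_left (nhdsWithin_mono (0:ℝ) (fun y hy => ne_of_lt hy))
  refine h2.congr' ?_ |>.mono_left le_rfl
  filter_upwards with t
  simp [slope_def_field, Real.rpow_zero]
theorem stmt_2
    (p q : ℝ → ℝ) (R : Set ℝ) (hR : MeasurableSet R)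
    (hp_meas : Measurable p) (hq_meas : Measurable q)
    (hp_nonneg : ∀ x, 0 ≤ p x) (hq_nonneg : ∀ x, 0 ≤ q x)
    (hp_pos : ∀ x ∈ R, 0 < p x) (hq_pos : ∀ x ∈ R, 0 < q x)
    (hp_int : IntegrableOn p R) (hq_int : IntegrableOn q R)
    (hp_one : ∫ x in R, p x = 1) (hq_one : ∫ x in R, q x = 1)
    (h_fin : IntegrableOn (fun x => p x * Real.log (q x)) R)
    (h_inv : IntegrableOn (fun x => p x / q x) R) :
    Tendsto (fun α : ℝ => (1 / (1 - α)) * Real.log (∫ x in R, p x * q x ^ (α - 1)))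
      (𝓝[<] 1) (𝓝 (-∫ x in R, p x * Real.log (q x))) := by
  set L : ℝ := ∫ x in R, p x * Real.log (q x) with hL
  set l : Filter ℝ := 𝓝[<] (0:ℝ) with hl
  set G : ℝ → ℝ := fun t => ∫ x in R, p x * ((q x ^ t - 1) / t) with hGdef
  -- eventually t ∈ Ioo (-1) 0
  have hmem : ∀ᶠ t in l, t ∈ Set.Ioo (-1 : ℝ) 0 :=
    Ioo_mem_nhdsLT_of_mem (by constructor <;> norm_num)
  -- the bound
  set bound : ℝ → ℝ := fun x => |p x * Real.log (q x)| + (p x + p x / q x) with hbdef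
  have hbound_int : IntegrableOn bound R := h_fin.abs.add (hp_int.add h_inv)
  have hbound : ∀ t ∈ Set.Ioo (-1:ℝ) 0, ∀ x ∈ R,
      ‖p x * ((q x ^ t - 1) / t)‖ ≤ bound x := by
    intro t ht x hx
    have hqx := hq_pos x hx
    have hpx := (hp_pos x hx).le
    have hk := my_key_ineq hqx ht
    rw [Real.norm_eq_abs, abs_mul, abs_of_nonneg hpx]
    have h1 : p x * |(q x ^ t - 1) / t| ≤ p x * (|Real.log (q x)| + (1 + 1 / q x)) :=
      mul_le_mul_of_nonneg_left hk hpx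
    have h2 : p x * (|Real.log (q x)| + (1 + 1 / q x))
        = p x * |Real.log (q x)| + (p x + p x / q x) := by ring
    have h3 : |p x * Real.log (q x)| = p x * |Real.log (q x)| := by
      rw [abs_mul, abs_of_nonneg hpx]
    rw [hbdef]; dsimp only; rw [h3]; linarith
  have hmeas : ∀ t : ℝ, AEStronglyMeasurable (fun x => p x * ((q x ^ t - 1) / t))
      (volume.restrict R) := by
    intro t
    exact (hp_meas.mul (((my_measurable_rpow_const hq_meas hq_nonneg t).sub
      measurable_const).div_const t)).aestronglyMeasurable
  -- integrability of the difference quotient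
  have hGint : ∀ t ∈ Set.Ioo (-1:ℝ) 0,
      IntegrableOn (fun x => p x * ((q x ^ t - 1) / t)) R := by
    intro t ht
    refine hbound_int.mono' (hmeas t) ?_
    rw [ae_restrict_iff' hR]
    exact ae_of_all _ (fun x hx => hbound t ht x hx)
  -- dominated convergence
  have hG : Tendsto G l (𝓝 L) := by
    refine tendsto_integral_filter_of_dominated_convergence bound
      (Eventually.of_forall hmeas) ?_ hbound_int ?_
    · filter_upwards [hmem] with t ht
      rw [ae_restrict_iff' hR]
      exact ae_of_all _ (fun x hx => hbound t ht x hx)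
    · rw [ae_restrict_iff' hR]
      refine ae_of_all _ (fun x hx => ?_)
      exact (my_tendsto_slope (hq_pos x hx)).const_mul (p x)
  -- F t = 1 + t * G t eventually
  have hFeq : ∀ᶠ t in l, (∫ x in R, p x * q x ^ t) = 1 + t * G t := by
    filter_upwards [hmem] with t ht
    have htne : t ≠ 0 := ne_of_lt ht.2
    have heq : ∀ x, p x * q x ^ t = p x + t * (p x * ((q x ^ t - 1) / t)) := by
      intro x; field_simp; ring
    calc (∫ x in R, p x * q x ^ t)
        = ∫ x in R, (p x + t * (p x * ((q x ^ t - 1) / t))) := by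
          exact setIntegral_congr_fun hR (fun x _ => heq x)
      _ = (∫ x in R, p x) + ∫ x in R, t * (p x * ((q x ^ t - 1) / t)) :=
          integral_add hp_int ((hGint t ht).const_mul t)
      _ = 1 + t * G t := by rw [hp_one, integral_const_mul]
  -- t * G t → 0
  have ht0 : Tendsto (fun t : ℝ => t) l (𝓝 0) := tendsto_id.mono_left nhdsWithin_le_nhds
  have huv : Tendsto (fun t => t * G t) l (𝓝 0) := by
    have := ht0.mul hG; simpa using this
  have hsmall : ∀ᶠ t in l, t * G t ∈ Set.Ioo (-(1:ℝ)/2) (1/2) :=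
    huv (Ioo_mem_nhds (by norm_num) (by norm_num))
  -- reduce to t-version
  have hsub : Tendsto (fun α : ℝ => α - 1) (𝓝[<] (1:ℝ)) l := by
    apply tendsto_nhdsWithin_of_tendsto_nhds_of_eventually_within
    · have : Tendsto (fun α : ℝ => α - 1) (𝓝 (1:ℝ)) (𝓝 0) := by
        have h : Tendsto (fun α : ℝ => α - 1) (𝓝 (1:ℝ)) (𝓝 (1-1)) := tendsto_id.sub_const 1
        simpa using h
      exact this.mono_left nhdsWithin_le_nhds
    · filter_upwards [self_mem_nhdsWithin] with α hα
      exact sub_neg.2 (Set.mem_Iio.mp hα)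
  suffices hmain : Tendsto (fun t : ℝ => (1 / (-t)) * Real.log (∫ x in R, p x * q x ^ t))
      l (𝓝 (-L)) by
    refine (hmain.comp hsub).congr (fun α => ?_)
    simp only [Function.comp]
    rw [neg_sub]
  -- squeeze
  have hlow : Tendsto (fun t => -(G t) / (1 + t * G t)) l (𝓝 (-L)) := by
    have hden : Tendsto (fun t => 1 + t * G t) l (𝓝 1) := by
      have := tendsto_const_nhds.add huv (f := fun _ : ℝ => (1:ℝ)); simpa using this
    have := hG.neg.div hden one_ne_zero
    rw [div_one] at this; exact this
  have hup : Tendsto (fun t => -(G t)) l (𝓝 (-L)) := hG.neg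
  refine tendsto_of_tendsto_of_tendsto_of_le_of_le' hlow hup ?_ ?_
  · filter_upwards [hmem, hsmall, hFeq] with t ht hs hF
    have htne : t ≠ 0 := ne_of_lt ht.2
    have hsne : (0:ℝ) < -t := by linarith [ht.2]
    set u := t * G t with hu
    have hupos : (0:ℝ) < 1 + u := by
      have := hs.1; simp only [Set.mem_Ioo] at hs; linarith [hs.1]
    -- log(1+u) ≥ u/(1+u)
    have hlog2 : u / (1 + u) ≤ Real.log (1 + u) := by
      have h := Real.log_le_sub_one_of_pos (show (0:ℝ) < (1+u)⁻¹ by positivity)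
      rw [Real.log_inv] at h
      have : (1+u)⁻¹ - 1 = -(u / (1+u)) := by field_simp; ring
      rw [this] at h; linarith
    have hstep : (1 / (-t)) * (u / (1 + u)) ≤ (1 / (-t)) * Real.log (1 + u) :=
      mul_le_mul_of_nonneg_left hlog2 (by positivity)
    have hrw : -(G t) / (1 + u) = (1 / (-t)) * (u / (1 + u)) := by
      rw [hu]; field_simp
    rw [hF, hrw]; exact hstep
  · filter_upwards [hmem, hsmall, hFeq] with t ht hs hF
    have htne : t ≠ 0 := ne_of_lt ht.2
    have hsne : (0:ℝ) < -t := by linarith [ht.2]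
    set u := t * G t with hu
    have hupos : (0:ℝ) < 1 + u := by
      simp only [Set.mem_Ioo] at hs; linarith [hs.1]
    have hlog1 : Real.log (1 + u) ≤ u := by
      have h := Real.log_le_sub_one_of_pos hupos; linarith
    have hstep : (1 / (-t)) * Real.log (1 + u) ≤ (1 / (-t)) * u :=
      mul_le_mul_of_nonneg_left hlog1 (by positivity)
    have hrw : -(G t) = (1 / (-t)) * u := by
      rw [hu]; field_simp
    rw [hF, hrw]; exact hstep
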